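/- Timed determinism of a two-node pipeline: consider a producer node P with period p and a consumer node C with period q, connected by a channel initialized empty with validity time t₀ + p (t₀ the start time). If P deterministically outputs value f(n) at its n-th firing, then regardless of the interleaving of rewrite steps, the n-th element ever appearing in the channel is f(n) with time-tag t₀ + n·p, and the sequence of values consumed by C (together with the activation times at which they are consumed) is uniquely determined. -/

import Mathlib

/-- A MIMOS channel: a finite sequence of time-tagged values (newest leftmost,
oldest rightmost) together with a validity time. -/
structure Channel (α : Type*) where
  elems : List (α × ℕ)   -- (value, time-tag), oldest element is the rightmost
  valid : ℕ              -- validity time of the channel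

/-- Channel invariants: every element's time-tag is at most the validity time, and
elements are ordered by time-tags, oldest (smallest tag) rightmost. -/
def ChannelInv {α : Type*} (c : Channel α) : Prop :=
  (∀ e ∈ c.elems, e.2 ≤ c.valid) ∧
  List.Pairwise (· ≥ ·) (c.elems.map Prod.snd)

/-- Configuration of the producer–consumer pipeline, tracking the full histories. -/
structure PC (α : Type*) where
  nP : ℕ                  -- number of firings of the producer P so far
  tP : ℕ                  -- next activation time of P
  buf : Channel α         -- the connecting channel
  hist : List (α × ℕ)     -- history of all elements ever appended (in order)
  tC : ℕ                  -- next activation time of the consumer C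
  cons : List (α × ℕ)     -- values consumed by C with their consumption times

/-- Initial configuration at start time `t₀`: channel empty with validity `t₀ + p`. -/
def PC.init {α : Type*} (t₀ p : ℕ) : PC α :=
  ⟨0, t₀, ⟨[], t₀ + p⟩, [], t₀, []⟩

/-- A move of P (always enabled): the `n`-th firing appends `f n` with tag
`tP + p` and updates the validity time to `tP + 2p`. -/
def moveP {α : Type*} (p : ℕ) (f : ℕ → α) (c : PC α) : PC α :=
  { c with
    nP := c.nP + 1
    tP := c.tP + p
    buf := ⟨(f c.nP, c.tP + p) :: c.buf.elems, c.tP + 2 * p⟩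
    hist := c.hist ++ [(f c.nP, c.tP + p)] }

/-- A move of C: consume the oldest element if its tag is `≤ tC`, otherwise idle;
in either case advance `tC` by `q`. -/
def moveC {α : Type*} (q : ℕ) (c : PC α) : PC α :=
  match c.buf.elems.getLast? with
  | some (a, τ) =>
      if τ ≤ c.tC then
        { c with
          buf := ⟨c.buf.elems.dropLast, c.buf.valid⟩
          tC := c.tC + q
          cons := c.cons ++ [(a, c.tC)] }
      else { c with tC := c.tC + q }
  | none => { c with tC := c.tC + q }

/-- C is enabled: it can fire, or it can provably idle (empty channel that is still
valid beyond `tC`, or oldest element in the future). -/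
def Cenabled {α : Type*} (c : PC α) : Prop :=
  (∃ a τ, c.buf.elems.getLast? = some (a, τ) ∧ τ ≤ c.tC) ∨
  (c.buf.elems = [] ∧ c.tC < c.buf.valid) ∨
  (∃ a τ, c.buf.elems.getLast? = some (a, τ) ∧ c.tC < τ)

/-- Interleavings: `true` = a step of P, `false` = a step of C. -/
def execPC {α : Type*} (p q : ℕ) (f : ℕ → α) : PC α → List Bool → PC α
  | c, [] => c
  | c, true :: ms => execPC p q f (moveP p f c) ms
  | c, false :: ms => execPC p q f (moveC q c) ms

/-- A valid run: every C step is taken only when C is enabled (P is always enabled). -/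
def RunPC {α : Type*} (p q : ℕ) (f : ℕ → α) : PC α → List Bool → Prop
  | _, [] => True
  | c, true :: ms => RunPC p q f (moveP p f c) ms
  | c, false :: ms => Cenabled c ∧ RunPC p q f (moveC q c) ms

namespace PipelineDetAux

variable {α : Type*}

/-- The produced element of index `n`. -/
def pe (p t₀ : ℕ) (f : ℕ → α) (n : ℕ) : α × ℕ := (f n, t₀ + (n + 1) * p)

/-- The main state invariant. -/
def Inv (p t₀ : ℕ) (f : ℕ → α) (c : PC α) : Prop :=
  c.tP = t₀ + c.nP * p ∧
  c.buf.valid = t₀ + (c.nP + 1) * p ∧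
  c.hist = (List.range c.nP).map (pe p t₀ f) ∧
  c.cons.length ≤ c.nP ∧
  c.buf.elems = (((List.range c.nP).drop c.cons.length).map (pe p t₀ f)).reverse

/-- The deterministic consumer step on the abstract consumer state
`(tC, consumed list)`. -/
def s (p q t₀ : ℕ) (f : ℕ → α) (x : ℕ × List (α × ℕ)) : ℕ × List (α × ℕ) :=
  if t₀ + (x.2.length + 1) * p ≤ x.1 then (x.1 + q, x.2 ++ [(f x.2.length, x.1)])
  else (x.1 + q, x.2)

lemma inv_init (p t₀ : ℕ) (f : ℕ → α) : Inv p t₀ f (PC.init (α := α) t₀ p) := by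
  refine ⟨by simp [PC.init], by simp [PC.init], by simp [PC.init],
    by simp [PC.init], by simp [PC.init]⟩

lemma inv_moveP (p t₀ : ℕ) (f : ℕ → α) (c : PC α) (h : Inv p t₀ f c) :
    Inv p t₀ f (moveP p f c) := by
  obtain ⟨h1, h2, h3, h4, h5⟩ := h
  refine ⟨?_, ?_, ?_, ?_, ?_⟩
  · simp [moveP, h1]; ring
  · simp [moveP, h1]; ring
  · simp only [moveP, h3, List.range_succ, List.map_append, List.map_cons,
      List.map_nil]
    simp [pe, h1]; ring
  · simp only [moveP]; exact h4.trans (Nat.le_succ _)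
  · simp only [moveP, List.range_succ]
    rw [List.drop_append_of_le_length (by simpa using h4)]
    simp [h5, pe, h1]; ring

lemma inv_moveC (p q t₀ : ℕ) (f : ℕ → α) (c : PC α) (h : Inv p t₀ f c)
    (hen : Cenabled c) :
    Inv p t₀ f (moveC q c) ∧
      ((moveC q c).tC, (moveC q c).cons) = s p q t₀ f (c.tC, c.cons) := by
  obtain ⟨h1, h2, h3, h4, h5⟩ := h
  set m := c.cons.length with hm
  have hlast : c.buf.elems.getLast? =
      (((List.range c.nP).drop m).map (pe p t₀ f)).head? := by
    rw [h5, List.getLast?_reverse]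
  rcases lt_or_eq_of_le h4 with hlt | heq
  · -- element present: oldest is `pe m`
    have hdrop : ((List.range c.nP).drop m).head? = some m := by
      rw [List.head?_drop]
      simp [List.getElem?_range hlt]
    have hlast' : c.buf.elems.getLast? = some (pe p t₀ f m) := by
      rw [hlast, List.head?_map, hdrop]; rfl
    by_cases hle : t₀ + (m + 1) * p ≤ c.tC
    · -- consume
      have hmc : moveC q c =
          { c with
            buf := ⟨c.buf.elems.dropLast, c.buf.valid⟩
            tC := c.tC + q
            cons := c.cons ++ [(f m, c.tC)] } := by
        rw [moveC, hlast']
        simp [pe, hle]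
      constructor
      · refine ⟨by simp [hmc, h1], by simp [hmc, h2], by simp [hmc, h3], ?_, ?_⟩
        · simp only [hmc]
          simpa using hlt
        · simp only [hmc]
          rw [h5, List.dropLast_reverse, ← List.map_tail, List.tail_drop]
          simp [← hm]
      · simp only [hmc, s, ← hm]
        simp [hle]
    · -- idle (future tag)
      have hmc : moveC q c = { c with tC := c.tC + q } := by
        rw [moveC, hlast']
        simp [pe, hle]
      constructor
      · exact ⟨by simp [hmc, h1], by simp [hmc, h2], by simp [hmc, h3],
          by simp [hmc, ← hm]; exact h4, by simp [hmc, h5, ← hm]⟩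
      · simp only [hmc, s, ← hm]
        simp [hle]
  · -- channel empty
    have hempty : c.buf.elems = [] := by
      rw [h5, heq]
      simp
    have hmc : moveC q c = { c with tC := c.tC + q } := by
      rw [moveC, hempty]
      rfl
    have hidle : c.tC < t₀ + (m + 1) * p := by
      rcases hen with ⟨a, τ, hsome, _⟩ | ⟨_, hv⟩ | ⟨a, τ, hsome, _⟩
      · rw [hempty] at hsome; simp at hsome
      · rw [heq, ← h2]; exact hv
      · rw [hempty] at hsome; simp at hsome
    constructor
    · exact ⟨by simp [hmc, h1], by simp [hmc, h2], by simp [hmc, h3],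
        by simp [hmc, ← hm]; exact h4, by simp [hmc, h5, ← hm]⟩
    · simp only [hmc, s, ← hm]
      simp [Nat.not_le.mpr hidle]

/-- Main simulation lemma. -/
lemma exec_sim (p q t₀ : ℕ) (f : ℕ → α) :
    ∀ (ms : List Bool) (c : PC α), Inv p t₀ f c → RunPC p q f c ms →
      Inv p t₀ f (execPC p q f c ms) ∧
        ((execPC p q f c ms).tC, (execPC p q f c ms).cons) =
          (s p q t₀ f)^[ms.count false] (c.tC, c.cons)
  | [], c, hInv, _ => by simpa [execPC] using hInv
  | true :: ms, c, hInv, hRun => by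
    have := exec_sim p q t₀ f ms (moveP p f c) (inv_moveP p t₀ f c hInv) hRun
    simpa [execPC, moveP] using this
  | false :: ms, c, hInv, hRun => by
    obtain ⟨hen, hRun'⟩ := hRun
    obtain ⟨hInv', hst⟩ := inv_moveC p q t₀ f c hInv hen
    have := exec_sim p q t₀ f ms (moveC q c) hInv' hRun'
    rw [execPC] at *
    refine ⟨this.1, ?_⟩
    rw [this.2, hst, List.count_cons]
    simp [Function.iterate_succ_apply]

lemma s_prefix (p q t₀ : ℕ) (f : ℕ → α) (x : ℕ × List (α × ℕ)) :
    x.2 <+: (s p q t₀ f x).2 := by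
  unfold s
  split <;> simp

lemma s_iter_prefix (p q t₀ : ℕ) (f : ℕ → α) (k : ℕ) (x : ℕ × List (α × ℕ)) :
    x.2 <+: ((s p q t₀ f)^[k] x).2 := by
  induction k generalizing x with
  | zero => simp
  | succ k ih =>
    rw [Function.iterate_succ_apply]
    exact (s_prefix p q t₀ f x).trans (ih _)

lemma s_iter_prefix_of_le (p q t₀ : ℕ) (f : ℕ → α) {k₁ k₂ : ℕ} (h : k₁ ≤ k₂)
    (x : ℕ × List (α × ℕ)) :
    ((s p q t₀ f)^[k₁] x).2 <+: ((s p q t₀ f)^[k₂] x).2 := by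
  obtain ⟨j, rfl⟩ := Nat.exists_eq_add_of_le h
  rw [Nat.add_comm, Function.iterate_add_apply]
  exact s_iter_prefix p q t₀ f j _

end PipelineDetAux

/-- timed determinism of a two-node pipeline.  For a producer `P` of
period `p > 0` deterministically outputting `f n` at its `n`-th firing and a
consumer `C` of period `q > 0`, starting from the initial configuration at `t₀`:
regardless of the interleaving, the `n`-th element ever appearing in the channel
(0-indexed) is `f n` with time-tag `t₀ + (n+1)·p`, and the consumed history of `C`
(value and consumption-time pairs) is uniquely determined — the consumed histories
of any two valid runs are comparable (one is a prefix of the other), so runs of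
equal progress agree. -/
theorem pipeline_timed_determinism {α : Type*} (p q t₀ : ℕ)
    (hp : 0 < p) (hq : 0 < q) (f : ℕ → α)
    (ms₁ ms₂ : List Bool)
    (h₁ : RunPC p q f (PC.init t₀ p) ms₁)
    (h₂ : RunPC p q f (PC.init t₀ p) ms₂) :
    (execPC p q f (PC.init t₀ p) ms₁).hist =
      (List.range (execPC p q f (PC.init t₀ p) ms₁).nP).map
        (fun n => (f n, t₀ + (n + 1) * p)) ∧
    ((execPC p q f (PC.init t₀ p) ms₁).cons <+:
       (execPC p q f (PC.init t₀ p) ms₂).cons ∨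
     (execPC p q f (PC.init t₀ p) ms₂).cons <+:
       (execPC p q f (PC.init t₀ p) ms₁).cons) := by
  open PipelineDetAux in
  have hi := inv_init (α := α) p t₀ f
  obtain ⟨hInv₁, hst₁⟩ := PipelineDetAux.exec_sim p q t₀ f ms₁ _ hi h₁
  obtain ⟨hInv₂, hst₂⟩ := PipelineDetAux.exec_sim p q t₀ f ms₂ _ hi h₂
  constructor
  · exact hInv₁.2.2.1
  · have hc₁ : (execPC p q f (PC.init t₀ p) ms₁).cons =
        ((PipelineDetAux.s p q t₀ f)^[ms₁.count false]
          ((PC.init (α := α) t₀ p).tC, (PC.init (α := α) t₀ p).cons)).2 := by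
      rw [← hst₁]
    have hc₂ : (execPC p q f (PC.init t₀ p) ms₂).cons =
        ((PipelineDetAux.s p q t₀ f)^[ms₂.count false]
          ((PC.init (α := α) t₀ p).tC, (PC.init (α := α) t₀ p).cons)).2 := by
      rw [← hst₂]
    rcases le_total (ms₁.count false) (ms₂.count false) with h | h
    · left
      rw [hc₁, hc₂]
      exact PipelineDetAux.s_iter_prefix_of_le p q t₀ f h _
    · right
      rw [hc₁, hc₂]
      exact PipelineDetAux.s_iter_prefix_of_le p q t₀ f h _
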